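/- arXiv:2306.14303 — 8 statements merged into one kernel-verified Lean document; each statement's English description precedes it below -/
import Mathlib

section
/- Let S be a semigroup acting on a metric space X such that Ss ⊆ sS for every s ∈ S (e.g., S commutative or a group). If the action is orbit k-Lipschitzian (d(sx, sy) ≤ k·D(x, o(y)) for all x,y ∈ X and s ∈ S), then it is strong-orbit k-Lipschitzian: D(sx, o(sy)) ≤ k·D(x, o(y)) for all s ∈ S, x, y ∈ X. -/
open ENNReal NNReal

/-- If a semigroup `S` satisfies `Ss ⊆ sS` for every `s ∈ S`, then every orbit
k-Lipschitzian action of `S` on a metric space is strong-orbit k-Lipschitzian. -/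
theorem orbit_lipschitz_implies_strong_orbit_lipschitz_of_Ss_subset_sS
    {S X : Type*} [Semigroup S] [MetricSpace X]
    (act : S → X → X) (hact : ∀ (s t : S) (x : X), act (s * t) x = act s (act t x))
    (k : ℝ≥0∞)
    (hsub : ∀ s p : S, ∃ q : S, p * s = s * q)
    (horb : ∀ (s : S) (x y : X),
      edist (act s x) (act s y) ≤ k * (edist x y ⊔ ⨆ t : S, edist x (act t y))) :
    ∀ (s : S) (x y : X),
      (edist (act s x) (act s y) ⊔ ⨆ p : S, edist (act s x) (act p (act s y)))
        ≤ k * (edist x y ⊔ ⨆ t : S, edist x (act t y)) := by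
  intro s x y
  apply sup_le (horb s x y)
  apply iSup_le
  intro p
  obtain ⟨q, hq⟩ := hsub s p
  have h1 : act p (act s y) = act s (act q y) := by
    rw [← hact, hq, hact]
  rw [h1]
  calc edist (act s x) (act s (act q y))
      ≤ k * (edist x (act q y) ⊔ ⨆ t : S, edist x (act t (act q y))) := horb s x (act q y)
    _ ≤ k * (edist x y ⊔ ⨆ t : S, edist x (act t y)) := by
        apply mul_le_mul_right
        apply sup_le
        · exact le_sup_of_le_right (le_iSup (fun t => edist x (act t y)) q)
        · apply iSup_le
          intro t
          rw [← hact]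
          exact le_sup_of_le_right (le_iSup (fun t' => edist x (act t' y)) (t * q))
end

section
/- Let 0 < a < 1 with a rational, and define S_a : [-1,1] → [-1,1] by S_a(x) = a·x if x is irrational and S_a(x) = -a·x if x is rational. Then S_a is orbit uniformly k-Lipschitzian with k = 3a, i.e., |S_a^n x − S_a^n y| ≤ 3a · sup{|x − S_a^m y| : m ≥ 0} for all x, y ∈ [-1,1] and n ≥ 1. -/
open Function

/-- The map `S_a x = a·x` for `x` irrational, `S_a x = -a·x` for `x` rational,
with `a ∈ ℚ ∩ (0,1)`, is orbit uniformly `3a`-Lipschitzian on `[-1,1]`. -/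
theorem Sa_orbit_uniformly_lipschitz (a : ℚ) (ha : 0 < a) (ha1 : (a : ℝ) < 1)
    (f : ℝ → ℝ)
    (hf : ∀ x : ℝ, (Irrational x → f x = (a : ℝ) * x) ∧ (¬ Irrational x → f x = -(a : ℝ) * x)) :
    ∀ x ∈ Set.Icc (-1 : ℝ) 1, ∀ y ∈ Set.Icc (-1 : ℝ) 1, ∀ n : ℕ, 1 ≤ n →
      |f^[n] x - f^[n] y| ≤ 3 * (a : ℝ) * ⨆ m : ℕ, |x - f^[m] y| := by
  have hb : (0:ℝ) < a := by exact_mod_cast ha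
  have hb1 : (a:ℝ) ≤ 1 := le_of_lt ha1
  have hirr : ∀ z : ℝ, Irrational z → ∀ n, Irrational (f^[n] z) ∧ f^[n] z = (a:ℝ)^n * z := by
    intro z hz n
    induction n with
    | zero => simpa using hz
    | succ n ih =>
      rw [Function.iterate_succ_apply']
      obtain ⟨ih1, ih2⟩ := ih
      have h1 : f (f^[n] z) = (a:ℝ) * f^[n] z := (hf _).1 ih1
      refine ⟨?_, ?_⟩
      · rw [h1]; exact ih1.ratCast_mul (ne_of_gt ha)
      · rw [h1, ih2]; ring
  have hrat : ∀ z : ℝ, ¬ Irrational z → ∀ n, ¬ Irrational (f^[n] z) ∧ f^[n] z = (-(a:ℝ))^n * z := by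
    intro z hz n
    induction n with
    | zero => simpa using hz
    | succ n ih =>
      rw [Function.iterate_succ_apply']
      obtain ⟨ih1, ih2⟩ := ih
      have h1 : f (f^[n] z) = -(a:ℝ) * f^[n] z := (hf _).2 ih1
      refine ⟨?_, ?_⟩
      · rw [h1]
        rw [Irrational] at ih1 ⊢
        push_neg at ih1 ⊢
        obtain ⟨q, hq⟩ := ih1
        exact ⟨-a * q, by push_cast; rw [hq]⟩
      · rw [h1, ih2]; ring
  have habs : ∀ z : ℝ, ∀ m : ℕ, |f^[m] z| = (a:ℝ)^m * |z| := by
    intro z m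
    by_cases hz : Irrational z
    · rw [(hirr z hz m).2, abs_mul, abs_pow, abs_of_pos hb]
    · rw [(hrat z hz m).2, abs_mul, abs_pow, abs_neg, abs_of_pos hb]
  intro x hx y hy n hn
  set M := ⨆ m : ℕ, |x - f^[m] y| with hM
  have hxb : |x| ≤ 1 := abs_le.2 ⟨hx.1, hx.2⟩
  have hyb : |y| ≤ 1 := abs_le.2 ⟨hy.1, hy.2⟩
  have hpow1 : ∀ m : ℕ, (a:ℝ)^m ≤ 1 := fun m => pow_le_one₀ hb.le hb1
  have hbdd : BddAbove (Set.range fun m : ℕ => |x - f^[m] y|) := by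
    refine ⟨2, ?_⟩
    rintro _ ⟨m, rfl⟩
    have h1 : |x - f^[m] y| ≤ |x| + |f^[m] y| := abs_sub _ _
    have h2 : |f^[m] y| ≤ |y| := by
      rw [habs]
      nlinarith [abs_nonneg y, hpow1 m]
    linarith
  have hle : ∀ m : ℕ, |x - f^[m] y| ≤ M := fun m => le_ciSup hbdd m
  have hxy : |x - y| ≤ M := by simpa using hle 0
  have hMnn : 0 ≤ M := le_trans (abs_nonneg _) hxy
  have hxM : |x| ≤ M := by
    have htend : Filter.Tendsto (fun m : ℕ => M + (a:ℝ)^m * |y|) Filter.atTop (nhds M) := by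
      have h0 : Filter.Tendsto (fun m : ℕ => (a:ℝ)^m) Filter.atTop (nhds 0) :=
        tendsto_pow_atTop_nhds_zero_of_lt_one hb.le ha1
      have := (h0.mul_const |y|).const_add M
      simpa using this
    refine ge_of_tendsto' htend ?_
    intro m
    have h1 : |x| ≤ |x - f^[m] y| + |f^[m] y| := by
      have := abs_add_le (x - f^[m] y) (f^[m] y)
      simpa using this
    have h2 : |f^[m] y| = (a:ℝ)^m * |y| := habs y m
    have := hle m
    linarith
  have hyM : |y| ≤ 2 * M := by
    have : |y| ≤ |x - y| + |x| := by
      have := abs_add_le (x - y) (-x)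
      simp only [abs_neg] at this
      calc |y| = |x - y + -x| := by rw [show x - y + -x = -y by ring, abs_neg]
        _ ≤ |x - y| + |x| := by simpa using this
    linarith
  have hpa : (a:ℝ)^n ≤ (a:ℝ) := by
    calc (a:ℝ)^n ≤ (a:ℝ)^1 := pow_le_pow_of_le_one hb.le hb1 hn
      _ = a := pow_one _
  by_cases hxI : Irrational x <;> by_cases hyI : Irrational y
  · rw [(hirr x hxI n).2, (hirr y hyI n).2]
    have : |(a:ℝ)^n * x - (a:ℝ)^n * y| = (a:ℝ)^n * |x - y| := by
      rw [← mul_sub, abs_mul, abs_pow, abs_of_pos hb]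
    rw [this]
    nlinarith [abs_nonneg (x - y), pow_nonneg hb.le n]
  · rw [(hirr x hxI n).2, (hrat y hyI n).2]
    have h1 : |(a:ℝ)^n * x - (-(a:ℝ))^n * y| ≤ (a:ℝ)^n * (|x| + |y|) := by
      have := abs_sub ((a:ℝ)^n * x) ((-(a:ℝ))^n * y)
      rw [abs_mul, abs_mul, abs_pow, abs_pow, abs_neg, abs_of_pos hb] at this
      linarith [this]
    nlinarith [abs_nonneg x, abs_nonneg y, pow_nonneg hb.le n]
  · rw [(hrat x hxI n).2, (hirr y hyI n).2]
    have h1 : |(-(a:ℝ))^n * x - (a:ℝ)^n * y| ≤ (a:ℝ)^n * (|x| + |y|) := by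
      have := abs_sub ((-(a:ℝ))^n * x) ((a:ℝ)^n * y)
      rw [abs_mul, abs_mul, abs_pow, abs_pow, abs_neg, abs_of_pos hb] at this
      linarith [this]
    nlinarith [abs_nonneg x, abs_nonneg y, pow_nonneg hb.le n]
  · rw [(hrat x hxI n).2, (hrat y hyI n).2]
    have : |(-(a:ℝ))^n * x - (-(a:ℝ))^n * y| = (a:ℝ)^n * |x - y| := by
      rw [← mul_sub, abs_mul, abs_pow, abs_neg, abs_of_pos hb]
    rw [this]
    nlinarith [abs_nonneg (x - y), pow_nonneg hb.le n]
end

section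
/- Let X = [0,1] and define T(x) = x² for x ∈ [0,1) and T(1) = 0. Then the semigroup {T^n : n ∈ ℕ} satisfies condition (⋆) with constant k = 1: for every pair (x,y) ∈ X × X with D(x, o(y)) ≤ D(x, o(x)) and every n ∈ ℕ, inf over m ∈ ℕ of D(T^n x, o(T^{m+n} y)) ≤ D(x, o(y)). -/
open Function

section Aux

variable {T : ℝ → ℝ} (hT : ∀ x : ℝ, T x = if x < 1 then x ^ 2 else 0)

include hT

lemma sq_T_basic : ∀ z ∈ Set.Icc (0:ℝ) 1, T z ∈ Set.Icc (0:ℝ) 1 ∧ T z ≤ z := by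
  intro z ⟨h0, h1⟩
  rw [hT]
  split_ifs with h
  · refine ⟨⟨by positivity, by nlinarith⟩, by nlinarith⟩
  · exact ⟨⟨le_refl 0, zero_le_one⟩, h0⟩

lemma sq_T_iter_mem : ∀ (m : ℕ), ∀ z ∈ Set.Icc (0:ℝ) 1, T^[m] z ∈ Set.Icc (0:ℝ) 1 := by
  intro m
  induction m with
  | zero => intro z hz; simpa using hz
  | succ m ih =>
    intro z hz
    rw [Function.iterate_succ_apply']
    exact (sq_T_basic hT _ (ih z hz)).1

lemma sq_T_iter_le : ∀ (m : ℕ), ∀ z ∈ Set.Icc (0:ℝ) 1, T^[m] z ≤ z := by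
  intro m
  induction m with
  | zero => intro z _; simp
  | succ m ih =>
    intro z hz
    rw [Function.iterate_succ_apply']
    exact le_trans (sq_T_basic hT _ (sq_T_iter_mem hT m z hz)).2 (ih z hz)

lemma sq_T_iter_pow : ∀ (m : ℕ), ∀ z : ℝ, 0 ≤ z → z < 1 → T^[m] z ≤ z ^ m := by
  intro m
  induction m with
  | zero => intro z _ hz1; simpa using hz1.le
  | succ m ih =>
    intro z hz0 hz1
    rw [Function.iterate_succ_apply]
    have hTz : T z = z ^ 2 := by rw [hT]; simp [hz1]
    rcases Nat.eq_zero_or_pos m with hm | hm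
    · subst hm; simp [hTz]; nlinarith
    · have h1 : T^[m] (T z) ≤ (z ^ 2) ^ m := by
        rw [hTz]
        exact ih (z ^ 2) (by positivity) (by nlinarith)
      calc T^[m] (T z) ≤ (z ^ 2) ^ m := h1
        _ = z ^ (2 * m) := by rw [← pow_mul]
        _ ≤ z ^ (m + 1) := pow_le_pow_of_le_one hz0 hz1.le (by omega)

lemma sq_T_small : ∀ z ∈ Set.Icc (0:ℝ) 1, ∀ ε : ℝ, 0 < ε → ∃ m : ℕ, T^[m] z ≤ ε := by
  intro z ⟨h0, h1⟩ ε hε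
  rcases lt_or_eq_of_le h1 with h | h
  · obtain ⟨m, hm⟩ := exists_pow_lt_of_lt_one hε h
    exact ⟨m, (sq_T_iter_pow hT m z h0 h).trans hm.le⟩
  · refine ⟨1, ?_⟩
    subst h
    rw [Function.iterate_one, hT]
    simp [hε.le]

end Aux

/-- For `T x = x²` on `[0,1)`, `T 1 = 0`, the semigroup `{Tⁿ}` satisfies
condition (⋆) with constant `k = 1`. -/
theorem square_map_condition_star (T : ℝ → ℝ)
    (hT : ∀ x : ℝ, T x = if x < 1 then x ^ 2 else 0) :
    ∀ x ∈ Set.Icc (0 : ℝ) 1, ∀ y ∈ Set.Icc (0 : ℝ) 1,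
      (⨆ m : ℕ, |x - T^[m] y|) ≤ (⨆ m : ℕ, |x - T^[m] x|) →
      ∀ n : ℕ,
        (⨅ m : ℕ, ⨆ j : ℕ, |T^[n] x - T^[j] (T^[m + n] y)|) ≤ ⨆ m : ℕ, |x - T^[m] y| := by
  intro x hx y hy _hstar n
  -- boundedness of the RHS family
  have hbdd : BddAbove (Set.range fun m : ℕ => |x - T^[m] y|) := by
    refine ⟨1, ?_⟩
    rintro r ⟨m, rfl⟩
    have hm := sq_T_iter_mem hT m y hy
    rw [abs_le]
    constructor <;> [nlinarith [hx.1, hx.2, hm.1, hm.2]; nlinarith [hx.1, hx.2, hm.1, hm.2]]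
  -- RHS is at least x
  have hxS : x ≤ ⨆ m : ℕ, |x - T^[m] y| := by
    refine le_of_forall_sub_le ?_
    intro ε hε
    obtain ⟨m, hm⟩ := sq_T_small hT y hy ε hε
    have h1 : x - ε ≤ |x - T^[m] y| := by
      have h0 : 0 ≤ T^[m] y := (sq_T_iter_mem hT m y hy).1
      have := le_abs_self (x - T^[m] y)
      linarith
    exact h1.trans (le_ciSup hbdd m)
  -- the infimum family is bounded below by 0
  have hbelow : BddBelow (Set.range fun m : ℕ => ⨆ j : ℕ, |T^[n] x - T^[j] (T^[m + n] y)|) := by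
    refine ⟨0, ?_⟩
    rintro r ⟨m, rfl⟩
    exact Real.iSup_nonneg fun j => abs_nonneg _
  rcases eq_or_lt_of_le hx.1 with h0 | h0
  · -- x = 0
    refine ciInf_le_of_le hbelow 0 ?_
    refine ciSup_le fun j => ?_
    have hx0 : T^[n] x = 0 := by
      rw [← h0]
      exact Function.iterate_fixed (by rw [hT]; norm_num) n
    have hmem : T^[0 + n] y ∈ Set.Icc (0:ℝ) 1 := sq_T_iter_mem hT _ y hy
    have hle : T^[j] (T^[0 + n] y) ≤ y := by
      calc T^[j] (T^[0 + n] y) ≤ T^[0 + n] y := sq_T_iter_le hT j _ hmem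
        _ ≤ y := sq_T_iter_le hT _ y hy
    have hge : 0 ≤ T^[j] (T^[0 + n] y) := (sq_T_iter_mem hT j _ hmem).1
    have h1 : |T^[n] x - T^[j] (T^[0 + n] y)| ≤ |x - T^[0] y| := by
      rw [hx0, ← h0]
      simp only [Function.iterate_zero, id_eq]
      rw [zero_sub, zero_sub, abs_neg, abs_neg, abs_of_nonneg hge, abs_of_nonneg hy.1]
      exact hle
    exact h1.trans (le_ciSup hbdd 0)
  · -- 0 < x
    obtain ⟨m₀, hm₀⟩ := sq_T_small hT y hy x h0
    refine ciInf_le_of_le hbelow m₀ ?_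
    refine ciSup_le fun j => ?_
    refine le_trans ?_ hxS
    have hmemy : T^[m₀] y ∈ Set.Icc (0:ℝ) 1 := sq_T_iter_mem hT m₀ y hy
    have hb : T^[j] (T^[m₀ + n] y) ≤ x := by
      have h1 : T^[m₀ + n] y ≤ T^[m₀] y := by
        rw [add_comm, Function.iterate_add_apply]
        exact sq_T_iter_le hT n _ hmemy
      have hmem2 : T^[m₀ + n] y ∈ Set.Icc (0:ℝ) 1 := sq_T_iter_mem hT _ y hy
      calc T^[j] (T^[m₀ + n] y) ≤ T^[m₀ + n] y := sq_T_iter_le hT j _ hmem2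
        _ ≤ T^[m₀] y := h1
        _ ≤ x := hm₀
    have hb0 : 0 ≤ T^[j] (T^[m₀ + n] y) :=
      (sq_T_iter_mem hT j _ (sq_T_iter_mem hT _ y hy)).1
    have ha : T^[n] x ≤ x := sq_T_iter_le hT n x hx
    have ha0 : 0 ≤ T^[n] x := (sq_T_iter_mem hT n x hx).1
    rw [abs_le]
    constructor <;> linarith
end

section
/- Let T : [0,1] → [0,1] be T(x) = x² for x ∈ [0,1) and T(1) = 0. Then for every k < 2 the semigroup {T^n : n ∈ ℕ} is not an orbit k-Lipschitzian action: sup over n ∈ ℕ and y ∈ [0,1) of d(T^n(y/2), T^n(y)) / D(y/2, o(y)) equals 2, where D(y/2, o(y)) = y/2. -/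
open Function

private lemma iter_eq_pow (T : ℝ → ℝ)
    (hT : ∀ x : ℝ, T x = if x < 1 then x ^ 2 else 0) :
    ∀ n : ℕ, ∀ x : ℝ, 0 ≤ x → x < 1 → T^[n] x = x ^ (2 ^ n) := by
  intro n
  induction n with
  | zero => intro x _ _; simp
  | succ n ih =>
    intro x hx0 hx1
    have hx2 : x ^ 2 < 1 := by nlinarith
    rw [Function.iterate_succ_apply, hT x, if_pos hx1,
      ih (x ^ 2) (by positivity) hx2, ← pow_mul]
    congr 1
    rw [pow_succ]
    ring

private lemma key_witness (k : ℝ) (hk : k < 2) :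
    ∃ n : ℕ, 1 ≤ n ∧ ∃ y : ℝ, 0 < y ∧ y < 1 ∧
      k * (y / 2) < y ^ (2 ^ n) - (y / 2) ^ (2 ^ n) := by
  suffices h : ∀ k' : ℝ, 1 ≤ k' → k' < 2 → ∃ n : ℕ, 1 ≤ n ∧ ∃ y : ℝ, 0 < y ∧ y < 1 ∧
      k' * (y / 2) < y ^ (2 ^ n) - (y / 2) ^ (2 ^ n) by
    obtain ⟨n, hn, y, hy0, hy1, hlt⟩ := h (max k 1) (le_max_right _ _) (max_lt hk one_lt_two)
    refine ⟨n, hn, y, hy0, hy1, lt_of_le_of_lt ?_ hlt⟩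
    have := le_max_left k 1
    nlinarith
  intro k' hk1 hk2
  set ε := 2 - k' with hεdef
  have hε0 : 0 < ε := by simp [hεdef]; linarith
  have hε1 : ε ≤ 1 := by simp [hεdef]; linarith
  obtain ⟨n₀, hn₀⟩ := exists_pow_lt_of_lt_one (by positivity : (0:ℝ) < ε / 8)
    (by norm_num : (1:ℝ) / 2 < 1)
  refine ⟨n₀ + 1, le_add_self, ?_⟩
  set m := 2 ^ (n₀ + 1) with hmdef
  have hmn : n₀ ≤ m := by
    have := Nat.lt_two_pow_self (n := n₀)
    have h2 : 2 ^ n₀ ≤ m := Nat.pow_le_pow_right (by norm_num) (Nat.le_succ _)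
    omega
  have hm2 : 2 ≤ m := by
    have : 2 ^ 1 ≤ m := Nat.pow_le_pow_right (by norm_num) (by omega)
    simpa using this
  have hmR : (2:ℝ) ≤ (m:ℝ) := by exact_mod_cast hm2
  have hsmall : ((1:ℝ) / 2) ^ m < ε / 8 :=
    lt_of_le_of_lt (pow_le_pow_of_le_one (by norm_num) (by norm_num) hmn) hn₀
  set δ : ℝ := ε / (8 * m) with hδdef
  have hδ0 : 0 < δ := by positivity
  have hδsmall : δ < 1 := by
    rw [hδdef, div_lt_one (by positivity)]
    nlinarith
  set y : ℝ := 1 - δ with hydef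
  have hy0 : 0 < y := by simp [hydef]; linarith
  have hy1 : y < 1 := by simp [hydef]; linarith
  refine ⟨y, hy0, hy1, ?_⟩
  have hbern : 1 - (m:ℝ) * δ ≤ y ^ m := by
    have := one_add_mul_le_pow (a := -δ) (by linarith) m
    simpa [hydef, sub_eq_add_neg, mul_comm] using this
  have hmδ : (m:ℝ) * δ = ε / 8 := by
    rw [hδdef]
    field_simp
  have hA2 : 1 - ε / 8 ≤ y ^ m := by rw [← hmδ]; exact hbern
  have hA1 : y ^ m ≤ 1 := pow_le_one₀ hy0.le hy1.le
  have hA0 : 0 < y ^ m := by positivity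
  have hB0 : (0:ℝ) < (1/2 : ℝ) ^ m := by positivity
  have hsplit : (y / 2) ^ m = y ^ m * (1/2 : ℝ) ^ m := by
    rw [← mul_pow]; ring_nf
  rw [hsplit]
  have hprod : (1 - ε / 8) * (1 - ε / 8) ≤ y ^ m * (1 - (1/2:ℝ) ^ m) := by
    apply mul_le_mul hA2 (by linarith) (by linarith) hA0.le
  have hk'ε : k' = 2 - ε := by simp [hεdef]
  nlinarith [mul_nonneg (by linarith : (0:ℝ) ≤ 2 - ε) (by linarith : (0:ℝ) ≤ 1 - y),
    sq_nonneg ε]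

private lemma sup_orbit (T : ℝ → ℝ)
    (hT : ∀ x : ℝ, T x = if x < 1 then x ^ 2 else 0)
    (y : ℝ) (hy0 : 0 < y) (hy1 : y < 1) :
    (⨆ m : ℕ, |y / 2 - T^[m] y|) = y / 2 := by
  have hbound : ∀ m : ℕ, |y / 2 - T^[m] y| ≤ y / 2 := by
    intro m
    rw [iter_eq_pow T hT m y hy0.le hy1]
    have h1 : y ^ 2 ^ m ≤ y := pow_le_of_le_one hy0.le hy1.le (by positivity)
    have h2 : 0 ≤ y ^ 2 ^ m := by positivity
    rw [abs_le]
    constructor <;> linarith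
  refine le_antisymm (ciSup_le hbound) ?_
  have hb : BddAbove (Set.range fun m : ℕ => |y / 2 - T^[m] y|) := by
    refine ⟨y / 2, ?_⟩
    rintro r ⟨m, rfl⟩
    exact hbound m
  have h0 := le_ciSup hb 0
  have he : |y / 2 - T^[0] y| = y / 2 := by
    rw [Function.iterate_zero_apply, abs_of_nonpos (by linarith)]
    ring
  rw [he] at h0
  exact h0

/-- For `T x = x²` on `[0,1)`, `T 1 = 0`, the semigroup `{Tⁿ}` is not an orbit
k-Lipschitzian action for any `k < 2`; in fact the supremum of the relevant ratios is `2`. -/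
theorem square_map_not_orbit_lipschitz (T : ℝ → ℝ)
    (hT : ∀ x : ℝ, T x = if x < 1 then x ^ 2 else 0) :
    (∀ k : ℝ, k < 2 →
      ¬ (∀ n : ℕ, 1 ≤ n → ∀ x ∈ Set.Icc (0 : ℝ) 1, ∀ y ∈ Set.Icc (0 : ℝ) 1,
          |T^[n] x - T^[n] y| ≤ k * ⨆ m : ℕ, |x - T^[m] y|)) ∧
    sSup {r : ℝ | ∃ n : ℕ, ∃ y ∈ Set.Ico (0 : ℝ) 1,
        r = |T^[n] (y / 2) - T^[n] y| / (y / 2)} = 2 := by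
  constructor
  · intro k hk h
    obtain ⟨n, hn, y, hy0, hy1, hlt⟩ := key_witness k hk
    have := h n hn (y / 2) ⟨by linarith, by linarith⟩ y ⟨by linarith, by linarith⟩
    rw [iter_eq_pow T hT n (y / 2) (by linarith) (by linarith),
      iter_eq_pow T hT n y hy0.le hy1, sup_orbit T hT y hy0 hy1] at this
    have hle : (y / 2) ^ 2 ^ n ≤ y ^ 2 ^ n :=
      pow_le_pow_left₀ (by linarith) (by linarith) _
    rw [abs_of_nonpos (by linarith)] at this
    linarith
  · have hSne : {r : ℝ | ∃ n : ℕ, ∃ y ∈ Set.Ico (0 : ℝ) 1,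
        r = |T^[n] (y / 2) - T^[n] y| / (y / 2)}.Nonempty := by
      refine ⟨0, 0, 0, ⟨le_refl 0, zero_lt_one⟩, ?_⟩
      norm_num
    have hub : ∀ r ∈ {r : ℝ | ∃ n : ℕ, ∃ y ∈ Set.Ico (0 : ℝ) 1,
        r = |T^[n] (y / 2) - T^[n] y| / (y / 2)}, r ≤ 2 := by
      rintro r ⟨n, y, ⟨hy0, hy1⟩, rfl⟩
      rcases eq_or_lt_of_le hy0 with h0 | h0
      · rw [← h0]
        norm_num
      · rw [iter_eq_pow T hT n (y / 2) (by linarith) (by linarith),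
          iter_eq_pow T hT n y hy0 hy1]
        rw [div_le_iff₀ (by linarith : (0:ℝ) < y / 2)]
        have h1 : y ^ 2 ^ n ≤ y := pow_le_of_le_one hy0 hy1.le (by positivity)
        have hle : (y / 2) ^ 2 ^ n ≤ y ^ 2 ^ n :=
          pow_le_pow_left₀ (by linarith) (by linarith) _
        have h2 : 0 ≤ (y / 2) ^ 2 ^ n := by positivity
        rw [abs_of_nonpos (by linarith)]
        linarith
    refine le_antisymm (csSup_le hSne hub) ?_
    rw [le_csSup_iff ⟨2, hub⟩ hSne]
    intro b hb
    by_contra hb2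
    push_neg at hb2
    obtain ⟨n, hn, y, hy0, hy1, hlt⟩ := key_witness b hb2
    have hle : (y / 2) ^ 2 ^ n ≤ y ^ 2 ^ n :=
      pow_le_pow_left₀ (by linarith) (by linarith) _
    have hmem : (y ^ 2 ^ n - (y / 2) ^ 2 ^ n) / (y / 2) ∈
        {r : ℝ | ∃ n : ℕ, ∃ y ∈ Set.Ico (0 : ℝ) 1,
          r = |T^[n] (y / 2) - T^[n] y| / (y / 2)} := by
      refine ⟨n, y, ⟨hy0.le, hy1⟩, ?_⟩
      rw [iter_eq_pow T hT n (y / 2) (by linarith) (by linarith),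
        iter_eq_pow T hT n y hy0.le hy1, abs_of_nonpos (by linarith)]
      ring_nf
    have := hb hmem
    rw [div_le_iff₀ (by linarith : (0:ℝ) < y / 2)] at this
    linarith
end

section
/- Let X be the closed unit ball of ℓ^p (1 ≤ p < ∞), {e_n} the standard unit vectors, and T : X → X defined by T(e_n) = e_{n+1} and T(x) = e_1 for x not equal to any e_n. Then T has no fixed point, and for every x ∈ X, limsup_n ‖x − e_n‖_p = (‖x‖_p^p + 1)^{1/p}. -/
open ENNReal NNReal

/-- On the closed unit ball of `ℓ^p` (`1 ≤ p < ∞`), the map `T` sending `eₙ` to `eₙ₊₁`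
and everything else to `e₀` has no fixed point, and
`limsup_n ‖x - eₙ‖ = (‖x‖^p + 1)^(1/p)` for every `x` in the ball. -/

theorem lp_shift_map_no_fixed_point (p : ℝ≥0∞) [Fact (1 ≤ p)] (hp' : p ≠ ⊤)
    (T : lp (fun _ : ℕ => ℝ) p → lp (fun _ : ℕ => ℝ) p)
    (e : ℕ → lp (fun _ : ℕ => ℝ) p)
    (he : ∀ n : ℕ, e n = lp.single p n 1)
    (hT1 : ∀ n : ℕ, T (e n) = e (n + 1))
    (hT2 : ∀ x : lp (fun _ : ℕ => ℝ) p, (∀ n : ℕ, x ≠ e n) → T x = e 0) :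
    (∀ x : lp (fun _ : ℕ => ℝ) p, ‖x‖ ≤ 1 → T x ≠ x) ∧
    (∀ x : lp (fun _ : ℕ => ℝ) p, ‖x‖ ≤ 1 →
      Filter.limsup (fun n : ℕ => ‖x - e n‖) Filter.atTop
        = (‖x‖ ^ p.toReal + 1) ^ (1 / p.toReal)) := by
  have hq : 0 < p.toReal := ENNReal.toReal_pos (by
    intro h
    have hp1 : (1 : ℝ≥0∞) ≤ p := Fact.out
    simp [h] at hp1) hp'
  set q := p.toReal with hqdef
  have hene : ∀ n m : ℕ, n ≠ m → e n ≠ e m := by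
    intro n m hnm h
    have : e n n = e m n := by rw [h]
    rw [he, he, lp.single_apply_self, lp.single_apply_ne p m _ hnm] at this
    exact one_ne_zero this
  constructor
  · intro x _ hfix
    by_cases hx : ∃ n, x = e n
    · obtain ⟨n, rfl⟩ := hx
      rw [hT1 n] at hfix
      exact hene (n + 1) n (by omega) hfix
    · push_neg at hx
      rw [hT2 x hx] at hfix
      exact hx 0 hfix.symm
  · intro x _
    have hsum : Summable (fun i : ℕ => ‖x i‖ ^ q) := (lp.memℓp x).summable hq
    -- coordinates tend to 0
    have hx0 : Filter.Tendsto (fun i : ℕ => x i) Filter.atTop (nhds 0) := by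
      rw [tendsto_zero_iff_norm_tendsto_zero]
      have h2 := hsum.tendsto_atTop_zero.rpow_const (p := q⁻¹) (Or.inr (by positivity))
      rw [Real.zero_rpow (by positivity)] at h2
      refine h2.congr fun i => Real.rpow_rpow_inv (norm_nonneg _) hq.ne'
    -- the key tsum computation
    have key : ∀ n : ℕ, ‖x - e n‖ ^ q = ‖x‖ ^ q + (‖x n - 1‖ ^ q - ‖x n‖ ^ q) := by
      intro n
      rw [lp.norm_rpow_eq_tsum hq, lp.norm_rpow_eq_tsum hq]
      have hfun : (fun i : ℕ => ‖(x - e n) i‖ ^ q)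
          = (fun i : ℕ => ‖x i‖ ^ q)
            + (fun i : ℕ => if i = n then ‖x n - 1‖ ^ q - ‖x n‖ ^ q else 0) := by
        funext i
        simp only [Pi.add_apply, lp.coeFn_sub, Pi.sub_apply, he]
        rcases eq_or_ne i n with rfl | hi
        · rw [lp.single_apply_self, if_pos rfl]; ring
        · rw [lp.single_apply_ne p n _ hi, if_neg hi]; simp
      have hs2 : HasSum (fun i : ℕ => if i = n then ‖x n - 1‖ ^ q - ‖x n‖ ^ q else 0)
          (‖x n - 1‖ ^ q - ‖x n‖ ^ q) := hasSum_ite_eq n _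
      rw [hfun]
      exact (hsum.hasSum.add hs2).tsum_eq
    -- convergence of the norms
    have htend : Filter.Tendsto (fun n : ℕ => ‖x - e n‖) Filter.atTop
        (nhds ((‖x‖ ^ q + 1) ^ (1 / q))) := by
      have h1 : Filter.Tendsto (fun n : ℕ => ‖x - e n‖ ^ q) Filter.atTop
          (nhds (‖x‖ ^ q + 1)) := by
        have hx0n : Filter.Tendsto (fun n : ℕ => ‖x n - 1‖ ^ q - ‖x n‖ ^ q)
            Filter.atTop (nhds 1) := by
          have ha : Filter.Tendsto (fun n : ℕ => ‖x n - 1‖ ^ q) Filter.atTop (nhds 1) := by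
            have : Filter.Tendsto (fun n : ℕ => ‖x n - 1‖) Filter.atTop (nhds 1) := by
              have := (hx0.sub_const 1).norm
              simpa using this
            have h := this.rpow_const (p := q) (Or.inl one_ne_zero)
            simpa using h
          have hb : Filter.Tendsto (fun n : ℕ => ‖x n‖ ^ q) Filter.atTop (nhds 0) := by
            have h := hx0.norm.rpow_const (p := q) (Or.inr hq.le)
            rwa [norm_zero, Real.zero_rpow hq.ne'] at h
          simpa using ha.sub hb
        have := (tendsto_const_nhds (x := ‖x‖ ^ q) (f := Filter.atTop (α := ℕ))).add hx0n
        refine this.congr fun n => (key n).symm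
      have h2 := h1.rpow_const (p := 1 / q) (Or.inl (by positivity))
      refine h2.congr fun n => ?_
      rw [one_div, Real.rpow_rpow_inv (norm_nonneg _) hq.ne']
    exact htend.limsup_eq
end

section
/- In every proper metric space X (all closed balls compact), property (P) for nets holds: for any two bounded nets (x_s) and (z_s) indexed by a directed set with z_s ∈ cov({x_j : j ≥ s}) for all s, there exists z ∈ ⋂_s cov({z_j : j ≥ s}) such that limsup_s d(z, x_s) ≤ limsup_t limsup_s d(z_t, x_s). -/
/-- The admissible cover of a set: the intersection of all closed balls containing it. -/
def admCov {X : Type*} [MetricSpace X] (C : Set X) : Set X :=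
  ⋂ c : X, ⋂ r : ℝ, ⋂ _ : C ⊆ Metric.closedBall c r, Metric.closedBall c r

/-- Every proper metric space has property (P) for nets. -/
theorem proper_space_property_P {X : Type*} [MetricSpace X] [ProperSpace X]
    {ι : Type*} [Preorder ι] [IsDirected ι (· ≤ ·)] [Nonempty ι]
    (x z : ι → X)
    (hx : Bornology.IsBounded (Set.range x))
    (hz : Bornology.IsBounded (Set.range z))
    (hzx : ∀ s : ι, z s ∈ admCov {w : X | ∃ j : ι, s ≤ j ∧ w = x j}) :
    ∃ w ∈ ⋂ s : ι, admCov {v : X | ∃ j : ι, s ≤ j ∧ v = z j},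
      Filter.limsup (fun s : ι => dist w (x s)) Filter.atTop ≤
        Filter.limsup
          (fun t : ι => Filter.limsup (fun s : ι => dist (z t) (x s)) Filter.atTop)
          Filter.atTop := by
  classical
  obtain ⟨i0⟩ := ‹Nonempty ι›
  obtain ⟨r0, hr0⟩ := hx.subset_closedBall (x i0)
  obtain ⟨r1, hr1⟩ := hz.subset_closedBall (x i0)
  -- a cluster point of the net `z`
  have hcc : IsCompact (closure (Set.range z)) := hz.isCompact_closure
  have hle : Filter.map z Filter.atTop ≤ Filter.principal (closure (Set.range z)) := by
    rw [Filter.le_principal_iff]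
    exact Filter.mem_map.2 (Filter.Eventually.of_forall fun t =>
      subset_closure (Set.mem_range_self t))
  obtain ⟨w, -, hw⟩ := hcc.exists_clusterPt hle
  -- basic bounds
  have hxb : ∀ s, dist (x i0) (x s) ≤ r0 := fun s => by
    have := hr0 (Set.mem_range_self s); rwa [Metric.mem_closedBall, dist_comm] at this
  have hzb : ∀ t, dist (z t) (x i0) ≤ r1 := fun t => hr1 (Set.mem_range_self t)
  have hbdd : ∀ w0 : X, Filter.IsBoundedUnder (· ≤ ·) (Filter.atTop : Filter ι)
      (fun s => dist w0 (x s)) := fun w0 =>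
    Filter.isBoundedUnder_of ⟨dist w0 (x i0) + r0, fun s =>
      (dist_triangle w0 (x i0) (x s)).trans (by linarith [hxb s])⟩
  have hcob : ∀ w0 : X, Filter.IsCoboundedUnder (· ≤ ·) (Filter.atTop : Filter ι)
      (fun s => dist w0 (x s)) := fun w0 =>
    Filter.IsBoundedUnder.isCoboundedUnder_le
      (Filter.isBoundedUnder_of (f := Filter.atTop) ⟨0, fun s => dist_nonneg⟩)
  have hinb : Filter.IsBoundedUnder (· ≤ ·) (Filter.atTop : Filter ι)
      (fun t => Filter.limsup (fun s : ι => dist (z t) (x s)) Filter.atTop) := by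
    refine Filter.isBoundedUnder_of ⟨r1 + r0, fun t => ?_⟩
    refine Filter.limsup_le_of_le (hcob (z t)) (Filter.Eventually.of_forall fun s => ?_)
    exact (dist_triangle (z t) (x i0) (x s)).trans (by linarith [hxb s, hzb t])
  -- membership in all the admissible covers of tails of `z`
  refine ⟨w, ?_, ?_⟩
  · refine Set.mem_iInter.2 fun s => Set.mem_iInter.2 fun c => Set.mem_iInter.2 fun r =>
      Set.mem_iInter.2 fun hsub => ?_
    have hev : ∀ᶠ j in (Filter.atTop : Filter ι), z j ∈ Metric.closedBall c r :=
      (Filter.eventually_ge_atTop s).mono fun j hj => hsub ⟨j, hj, rfl⟩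
    have hle2 : Filter.map z Filter.atTop ≤ Filter.principal (Metric.closedBall c r) :=
      Filter.le_principal_iff.2 (Filter.mem_map.2 hev)
    have := hw.mono hle2
    have hwc : w ∈ closure (Metric.closedBall c r) := mem_closure_iff_clusterPt.2 this
    rwa [Metric.isClosed_closedBall.closure_eq] at hwc
  · set L := Filter.limsup
      (fun t : ι => Filter.limsup (fun s : ι => dist (z t) (x s)) Filter.atTop)
      Filter.atTop with hL
    refine le_of_forall_pos_le_add fun ε hε => ?_
    have hfreq : ∃ᶠ t in (Filter.atTop : Filter ι), dist (z t) w < ε / 2 := by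
      have := (mapClusterPt_iff_frequently.1 hw) (Metric.ball w (ε / 2))
        (Metric.ball_mem_nhds w (by linarith))
      exact this.mono fun t ht => by simpa [Metric.mem_ball] using ht
    have hevL : ∀ᶠ t in (Filter.atTop : Filter ι),
        Filter.limsup (fun s : ι => dist (z t) (x s)) Filter.atTop < L + ε / 2 :=
      Filter.eventually_lt_of_limsup_lt (by linarith [hε]) hinb
    obtain ⟨t, ht1, ht2⟩ := (hfreq.and_eventually hevL).exists
    have key : Filter.limsup (fun s : ι => dist w (x s)) Filter.atTop ≤
        dist w (z t) + Filter.limsup (fun s : ι => dist (z t) (x s)) Filter.atTop := by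
      have h1 : Filter.limsup (fun s : ι => dist w (x s)) Filter.atTop ≤
          Filter.limsup (fun s : ι => dist w (z t) + dist (z t) (x s)) Filter.atTop := by
        refine Filter.limsup_le_limsup (Filter.Eventually.of_forall fun s =>
          dist_triangle w (z t) (x s)) (hcob w) ?_
        refine Filter.isBoundedUnder_of ⟨dist w (z t) + (dist (z t) (x i0) + r0),
          fun s => ?_⟩
        have h2 := dist_triangle (z t) (x i0) (x s)
        have h3 := hxb s
        linarith
      rwa [limsup_const_add (Filter.atTop : Filter ι) (fun s => dist (z t) (x s))
        (dist w (z t)) (hbdd (z t)) (hcob (z t))] at h1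
    have hdw : dist w (z t) < ε / 2 := by rwa [dist_comm] at ht1
    linarith [key, ht2.le]
end

section
/- Let X be a complete metric space and S a semigroup acting on X such that the action is strong-orbit k-Lipschitzian with k < 1 (i.e., D(sx, o(sy)) ≤ k·D(x, o(y)) for all s ∈ S and x, y ∈ X). If some orbit is bounded, then there exists x ∈ X with sx = x for all s ∈ S. -/
open ENNReal NNReal Filter

/-- A strong-orbit k-Lipschitzian semigroup action with `k < 1` on a complete metric space
with a bounded orbit has a common fixed point. -/
theorem strong_orbit_contraction_common_fixed_point
    {S X : Type*} [Semigroup S] [MetricSpace X] [CompleteSpace X]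
    (act : S → X → X) (hact : ∀ (s t : S) (x : X), act (s * t) x = act s (act t x))
    (k : ℝ≥0) (hk : k < 1)
    (hstrong : ∀ (s : S) (x y : X),
      (edist (act s x) (act s y) ⊔ ⨆ t : S, edist (act s x) (act t (act s y)))
        ≤ (k : ℝ≥0∞) * (edist x y ⊔ ⨆ t : S, edist x (act t y)))
    (hbdd : ∃ x₀ : X, (⨆ t : S, edist x₀ (act t x₀)) < ⊤) :
    ∃ x : X, ∀ s : S, act s x = x := by
  obtain ⟨x₀, hb0⟩ := hbdd
  rcases isEmpty_or_nonempty S with h | h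
  · exact ⟨x₀, fun s => (h.false s).elim⟩
  obtain ⟨s₀⟩ := h
  set u : ℕ → X := fun n => (act s₀)^[n] x₀ with hu
  have husucc : ∀ n, u (n + 1) = act s₀ (u n) := fun n =>
    Function.iterate_succ_apply' (act s₀) n x₀
  set b : ℕ → ℝ≥0∞ := fun n => ⨆ t : S, edist (u n) (act t (u n)) with hbdef
  have hkk : (k : ℝ≥0∞) < 1 := by exact_mod_cast hk
  have hb0' : b 0 < ⊤ := by simpa [hbdef, hu] using hb0
  -- b (n+1) ≤ k * b n
  have hbstep : ∀ n, b (n + 1) ≤ (k : ℝ≥0∞) * b n := by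
    intro n
    have h1 := hstrong s₀ (u n) (u n)
    have hle : b (n + 1) ≤
        (edist (act s₀ (u n)) (act s₀ (u n)) ⊔
          ⨆ t : S, edist (act s₀ (u n)) (act t (act s₀ (u n)))) := by
      rw [hbdef]
      simp only [husucc n]
      exact le_sup_right
    have hre : (edist (u n) (u n) ⊔ ⨆ t : S, edist (u n) (act t (u n))) = b n := by
      simp [hbdef]
    calc b (n + 1) ≤ _ := hle
      _ ≤ (k : ℝ≥0∞) * (edist (u n) (u n) ⊔ ⨆ t : S, edist (u n) (act t (u n))) := h1
      _ = (k : ℝ≥0∞) * b n := by rw [hre]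
  have hbn : ∀ n, b n ≤ b 0 * (k : ℝ≥0∞) ^ n := by
    intro n
    induction n with
    | zero => simp
    | succ n ih =>
      calc b (n + 1) ≤ (k : ℝ≥0∞) * b n := hbstep n
        _ ≤ (k : ℝ≥0∞) * (b 0 * (k : ℝ≥0∞) ^ n) := by gcongr
        _ = b 0 * (k : ℝ≥0∞) ^ (n + 1) := by ring
  -- Cauchy sequence
  have hedist : ∀ n, edist (u n) (u (n + 1)) ≤ b 0 * (k : ℝ≥0∞) ^ n := by
    intro n
    refine le_trans ?_ (hbn n)
    rw [husucc n, hbdef]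
    exact le_iSup (fun t : S => edist (u n) (act t (u n))) s₀
  have hcauchy : CauchySeq u :=
    cauchySeq_of_edist_le_geometric (k : ℝ≥0∞) (b 0) hkk hb0'.ne hedist
  obtain ⟨x, hx⟩ := cauchySeq_tendsto_of_complete hcauchy
  refine ⟨x, fun s => ?_⟩
  -- auxiliary quantity
  set c : ℕ → ℝ≥0∞ := fun m => edist x (u m) + b m with hcdef
  have hc0 : Tendsto c atTop (nhds 0) := by
    have h1 : Tendsto (fun m => edist x (u m)) atTop (nhds 0) := by
      have := (EMetric.tendsto_atTop.mp hx)
      rw [ENNReal.tendsto_atTop_zero]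
      intro ε hε
      rcases this ε hε with ⟨N, hN⟩
      exact ⟨N, fun n hn => by rw [edist_comm]; exact (hN n hn).le⟩
    have h2 : Tendsto b atTop (nhds 0) := by
      have hpow : Tendsto (fun m => b 0 * (k : ℝ≥0∞) ^ m) atTop (nhds 0) := by
        have := ENNReal.tendsto_pow_atTop_nhds_zero_of_lt_one hkk
        have := ENNReal.Tendsto.const_mul (a := b 0) this (Or.inr hb0'.ne)
        simpa using this
      exact tendsto_of_tendsto_of_tendsto_of_le_of_le tendsto_const_nhds hpow
        (fun m => zero_le) hbn
    simpa using h1.add h2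
  -- key estimate: edist (act s x) x ≤ k * c m + c m for all m
  have hkey : ∀ m, edist (act s x) x ≤ (k : ℝ≥0∞) * c m + c m := by
    intro m
    have h1 : edist (act s x) (act s (u m)) ≤ (k : ℝ≥0∞) * c m := by
      refine le_trans (le_trans le_sup_left (hstrong s x (u m))) ?_
      gcongr
      refine sup_le ?_ ?_
      · exact le_trans le_self_add (le_refl _)
      · refine iSup_le fun t => ?_
        calc edist x (act t (u m)) ≤ edist x (u m) + edist (u m) (act t (u m)) :=
              edist_triangle _ _ _
          _ ≤ edist x (u m) + b m := by
              gcongr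
              exact le_iSup (fun t : S => edist (u m) (act t (u m))) t
    have h2 : edist (act s (u m)) x ≤ c m := by
      calc edist (act s (u m)) x ≤ edist (act s (u m)) (u m) + edist (u m) x :=
            edist_triangle _ _ _
        _ ≤ b m + edist x (u m) := by
            rw [edist_comm (act s (u m)) (u m), edist_comm (u m) x]
            gcongr
            exact le_iSup (fun t : S => edist (u m) (act t (u m))) s
        _ = c m := by rw [hcdef]; ring
    calc edist (act s x) x ≤ edist (act s x) (act s (u m)) + edist (act s (u m)) x :=
          edist_triangle _ _ _
      _ ≤ (k : ℝ≥0∞) * c m + c m := add_le_add h1 h2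
  have hlim : Tendsto (fun m => (k : ℝ≥0∞) * c m + c m) atTop (nhds 0) := by
    have := (ENNReal.Tendsto.const_mul (a := (k : ℝ≥0∞)) hc0 (Or.inr coe_ne_top)).add hc0
    simpa using this
  have : edist (act s x) x ≤ 0 := ge_of_tendsto' hlim hkey
  have h0 : edist (act s x) x = 0 := le_antisymm this zero_le
  exact edist_eq_zero.mp h0
end

section
/- Let X be a complete metric space, S a semigroup acting on X, and suppose the action is strong-orbit k-Lipschitzian. If x ∈ X satisfies r(x) := inf{D(x, o(y)) : y ∈ X} = 0 and some orbit is bounded, then x is a common fixed point: sx = x for all s ∈ S. -/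
open ENNReal NNReal

/-- For a strong-orbit k-Lipschitzian action, a point `x` with `r(x) = 0`
is a common fixed point. -/
theorem r_eq_zero_implies_common_fixed_point
    {S X : Type*} [Semigroup S] [MetricSpace X]
    (act : S → X → X) (hact : ∀ (s t : S) (x : X), act (s * t) x = act s (act t x))
    (k : ℝ≥0)
    (hstrong : ∀ (s : S) (x y : X),
      (edist (act s x) (act s y) ⊔ ⨆ t : S, edist (act s x) (act t (act s y)))
        ≤ (k : ℝ≥0∞) * (edist x y ⊔ ⨆ t : S, edist x (act t y)))
    (hbdd : ∃ x₀ : X, (⨆ t : S, edist x₀ (act t x₀)) < ⊤)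
    (x : X)
    (hr : (⨅ y : X, (edist x y ⊔ ⨆ t : S, edist x (act t y))) = 0) :
    ∀ s : S, act s x = x := by
  intro s
  have key : ∀ y : X, edist (act s x) x ≤
      ((k : ℝ≥0∞) + 1) * (edist x y ⊔ ⨆ t : S, edist x (act t y)) := by
    intro y
    set D : ℝ≥0∞ := edist x y ⊔ ⨆ t : S, edist x (act t y) with hD
    have h1 : edist (act s x) (act s y) ≤ (k : ℝ≥0∞) * D :=
      le_trans le_sup_left (hstrong s x y)
    have h2 : edist x (act s y) ≤ D :=
      le_sup_of_le_right (le_iSup (fun t => edist x (act t y)) s)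
    calc edist (act s x) x ≤ edist (act s x) (act s y) + edist (act s y) x :=
          edist_triangle _ _ _
      _ ≤ (k : ℝ≥0∞) * D + D := by
          gcongr
          rw [edist_comm]; exact h2
      _ = ((k : ℝ≥0∞) + 1) * D := by ring
  have h := le_iInf key
  rw [← ENNReal.mul_iInf_of_ne (by simp) (by simp), hr, mul_zero] at h
  exact edist_eq_zero.mp (le_antisymm h zero_le)
end
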